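/- With the notation of the path decomposition: for any indices i, j, the identity ((1−M)^{-1})_{1i}·P_i + Q_i = ((1−M)^{-1})_{1j}·P_j + Q_j holds in Q⟨⟨a_kl⟩⟩, where P_i = sum over j of P_ij (sum of all paths starting at i never returning to i) and Q_i is the sum of all paths starting at vertex 1 that never pass through i (so Q₁ = 0). -/

import Mathlib

/-! Setup: the ring `ℚ⟨⟨a_ij⟩⟩` of noncommutative power series in the `n²` letters
`a_ij` (`1 ≤ i,j ≤ n`) is realized via its graded embedding into `ℚ⟨a_ij⟩[[t]]`,
sending a letter to `t·a_ij`: a noncommutative series is determined by its homogeneous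
components, which are noncommutative polynomials, i.e. elements of the free algebra.
Words over the alphabet `{a_ij}` are lists of edges `(i,j)` of the complete digraph
on the vertex set `Fin n`, identified with paths. -/

/-- An edge of the complete digraph on `Fin n`, i.e. a letter `a_ij`. -/
abbrev Edge (n : ℕ) := Fin n × Fin n

/-- `isPath i j w = true` iff the word `w` is a path from `i` to `j`. -/
def isPath {n : ℕ} (i j : Fin n) : List (Edge n) → Bool
  | [] => decide (i = j)
  | e :: rest => decide (i = e.1) && isPath e.2 j rest

/-- `firstRet i v w = true` iff `w` is a nonempty path from `v` which reaches `i`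
exactly at its last step (and never before).  The code `C_i` (nonempty paths `i → i`
not passing through `i` internally) is `firstRet i i`. -/
def firstRet {n : ℕ} (i v : Fin n) : List (Edge n) → Bool
  | [] => false
  | e :: rest =>
      decide (v = e.1) && (if e.2 = i then rest.isEmpty else firstRet i e.2 rest)

/-- `avoidTo i v j w = true` iff `w` is a path from `v` to `j` never visiting `i`
after its starting point.  `P_ij` is `avoidTo i i j` (so `P_ii = {ε}`). -/
def avoidTo {n : ℕ} (i v j : Fin n) : List (Edge n) → Bool
  | [] => decide (v = j)
  | e :: rest => decide (v = e.1) && !decide (e.2 = i) && avoidTo i e.2 j rest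

/-- `avoidFrom i v w = true` iff `w` is a path from `v` never visiting `i` after its
starting point.  `P_i = ∑_j P_ij` is `avoidFrom i i`. -/
def avoidFrom {n : ℕ} (i v : Fin n) : List (Edge n) → Bool
  | [] => true
  | e :: rest => decide (v = e.1) && !decide (e.2 = i) && avoidFrom i e.2 rest

/-- The element of the free algebra corresponding to a word. -/
noncomputable def wordOf {n : ℕ} (w : List (Edge n)) : FreeAlgebra ℚ (Edge n) :=
  (w.map (FreeAlgebra.ι ℚ)).prod

/-- The characteristic series (an element of `ℚ⟨⟨a_ij⟩⟩`) of the language of words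
satisfying `p`: its homogeneous component of degree `m` is the sum of all words of
length `m` in the language. -/
noncomputable def ser {n : ℕ} (p : List (Edge n) → Bool) :
    PowerSeries (FreeAlgebra ℚ (Edge n)) :=
  PowerSeries.mk fun m =>
    ∑ w : List.Vector (Edge n) m, if p w.toList then wordOf w.toList else 0

/-- The generic `n × n` matrix `M = (a_ij)` over `ℚ⟨⟨a_ij⟩⟩`. -/
noncomputable def genM (n : ℕ) :
    Matrix (Fin n) (Fin n) (PowerSeries (FreeAlgebra ℚ (Edge n))) :=
  Matrix.of fun i j => PowerSeries.X * PowerSeries.C (FreeAlgebra.ι ℚ (i, j))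

variable {n : ℕ}

def LL (n m : ℕ) : Finset (List (Edge n)) :=
  Finset.univ.map ⟨fun v : List.Vector (Edge n) m => v.toList,
    fun a b h => Subtype.ext h⟩

lemma mem_LL {m : ℕ} {w : List (Edge n)} : w ∈ LL n m ↔ w.length = m := by
  constructor
  · rintro hw
    simp only [LL, Finset.mem_map, Function.Embedding.coeFn_mk] at hw
    obtain ⟨v, -, rfl⟩ := hw
    exact v.2
  · intro h
    simp only [LL, Finset.mem_map, Function.Embedding.coeFn_mk]
    exact ⟨⟨w, h⟩, Finset.mem_univ _, rfl⟩

lemma coeff_ser (p : List (Edge n) → Bool) (m : ℕ) :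
    PowerSeries.coeff m (ser p) = ∑ w ∈ LL n m, if p w then wordOf w else 0 := by
  simp only [ser, PowerSeries.coeff_mk, LL, Finset.sum_map, Function.Embedding.coeFn_mk]; rfl

lemma wordOf_append (u v : List (Edge n)) : wordOf (u ++ v) = wordOf u * wordOf v := by
  simp [wordOf]

lemma ser_congr {p q : List (Edge n) → Bool} (h : ∀ w, p w = q w) : ser p = ser q := by
  have : p = q := funext h
  rw [this]

lemma ser_mul (p q : List (Edge n) → Bool)
    (f : List (Edge n) → Option (List (Edge n) × List (Edge n)))
    (h1 : ∀ w u v, f w = some (u, v) → w = u ++ v ∧ p u = true ∧ q v = true)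
    (h2 : ∀ u v, p u = true → q v = true → f (u ++ v) = some (u, v)) :
    ser p * ser q = ser (fun w => (f w).isSome) := by
  ext m
  rw [PowerSeries.coeff_mul]
  simp only [coeff_ser]
  have step1 : ∀ kl : ℕ × ℕ,
      (∑ u ∈ LL n kl.1, if p u then wordOf u else 0) *
        (∑ v ∈ LL n kl.2, if q v then wordOf v else 0) =
      ∑ uv ∈ LL n kl.1 ×ˢ LL n kl.2,
        if p uv.1 = true ∧ q uv.2 = true then wordOf (uv.1 ++ uv.2) else 0 := by
    intro kl
    rw [Finset.sum_mul_sum, ← Finset.sum_product']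
    refine Finset.sum_congr rfl fun uv _ => ?_
    by_cases hp : p uv.1 <;> by_cases hq : q uv.2 <;>
      simp [hp, hq, wordOf_append]
  simp only [step1]
  rw [Finset.sum_sigma']
  rw [← Finset.sum_filter, ← Finset.sum_filter]
  refine Finset.sum_bij' (i := fun x _ => x.2.1 ++ x.2.2)
    (j := fun w hw => ⟨(((f w).get (by simpa using (Finset.mem_filter.mp hw).2)).1.length,
        ((f w).get (by simpa using (Finset.mem_filter.mp hw).2)).2.length),
      (f w).get (by simpa using (Finset.mem_filter.mp hw).2)⟩)
    ?_ ?_ ?_ ?_ ?_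
  · intro x hx
    simp only [Finset.mem_filter, Finset.mem_sigma, Finset.mem_product,
      Finset.mem_antidiagonal, mem_LL] at hx ⊢
    obtain ⟨⟨hkl, hu, hv⟩, hp, hq⟩ := hx
    refine ⟨by simpa [hu, hv] using Finset.HasAntidiagonal.mem_antidiagonal.mp hkl, ?_⟩
    rw [h2 _ _ hp hq]; rfl
  · intro w hw
    simp only [Finset.mem_filter, mem_LL] at hw
    obtain ⟨u, v, huv⟩ : ∃ u v, f w = some (u, v) := by
      rcases Option.isSome_iff_exists.mp hw.2 with ⟨⟨u, v⟩, h⟩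
      exact ⟨u, v, h⟩
    obtain ⟨hw', hp, hq⟩ := h1 w u v huv
    have hlen : u.length + v.length = m := by
      rw [← List.length_append, ← hw', hw.1]
    simp [Finset.mem_filter, Finset.mem_sigma, Finset.mem_product,
      Finset.mem_antidiagonal, mem_LL, huv, hp, hq, hlen]
  · rintro ⟨⟨k, l⟩, ⟨u, v⟩⟩ hx
    simp only [Finset.mem_filter, Finset.mem_sigma, Finset.mem_product,
      Finset.mem_antidiagonal, mem_LL] at hx
    obtain ⟨⟨hkl, hu, hv⟩, hp, hq⟩ := hx
    subst hu; subst hv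
    simp only [h2 u v hp hq, Option.get_some]
  · intro w hw
    simp only [Finset.mem_filter, mem_LL] at hw
    obtain ⟨u, v, huv⟩ : ∃ u v, f w = some (u, v) := by
      rcases Option.isSome_iff_exists.mp hw.2 with ⟨⟨u, v⟩, h⟩
      exact ⟨u, v, h⟩
    simp only [huv, Option.get_some]
    exact ((h1 w u v huv).1).symm
  · intro x hx
    rfl

lemma ser_add (p q r : List (Edge n) → Bool)
    (h : ∀ w, r w = (p w || q w)) (hd : ∀ w, ¬(p w = true ∧ q w = true)) :
    ser p + ser q = ser r := by
  ext m
  simp only [map_add, coeff_ser, ← Finset.sum_add_distrib]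
  refine Finset.sum_congr rfl fun w _ => ?_
  have := hd w
  rcases hp : p w <;> rcases hq : q w <;> simp_all [h w]

lemma ser_sum {ι : Type*} [Fintype ι] (p : ι → List (Edge n) → Bool)
    (r : List (Edge n) → Bool)
    (h : ∀ w, r w = true ↔ ∃ t, p t w = true)
    (hd : ∀ t t' w, p t w = true → p t' w = true → t = t') :
    ∑ t, ser (p t) = ser r := by
  ext m
  simp only [map_sum, coeff_ser, Finset.sum_comm (s := Finset.univ)]
  refine Finset.sum_congr rfl fun w _ => ?_
  by_cases hr : r w = true
  · obtain ⟨t, ht⟩ := (h w).mp hr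
    rw [if_pos hr, Finset.sum_eq_single t]
    · rw [if_pos ht]
    · intro t' _ hne
      rw [if_neg]
      intro ht'
      exact hne (hd t' t w ht' ht)
    · intro habs; exact absurd (Finset.mem_univ t) habs
  · rw [if_neg hr]
    refine Finset.sum_eq_zero fun t _ => ?_
    rw [if_neg]
    intro ht
    exact hr ((h w).mpr ⟨t, ht⟩)

lemma ser_nil : ser (fun w : List (Edge n) => decide (w = [])) = 1 := by
  ext m
  rw [coeff_ser, PowerSeries.coeff_one]
  rcases m with - | m
  · rw [if_pos rfl]
    have : LL n 0 = {[]} := by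
      ext w; simp [mem_LL, List.length_eq_zero_iff]
    rw [this]
    simp [wordOf]
  · rw [if_neg (by omega)]
    refine Finset.sum_eq_zero fun w hw => ?_
    rw [mem_LL] at hw
    rw [if_neg]
    simp only [decide_eq_true_eq]
    intro h; subst h; simp at hw

lemma ser_single (e : Edge n) :
    ser (fun w => decide (w = [e])) = PowerSeries.X * PowerSeries.C (FreeAlgebra.ι ℚ e) := by
  ext m
  rw [coeff_ser]
  rcases m with - | m
  · rw [PowerSeries.coeff_zero_X_mul]
    refine Finset.sum_eq_zero fun w hw => ?_
    rw [mem_LL] at hw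
    rw [if_neg]; simp only [decide_eq_true_eq]; intro h; subst h; simp at hw
  · rw [PowerSeries.coeff_succ_X_mul, PowerSeries.coeff_C]
    rcases m with - | m
    · rw [if_pos rfl]
      have : LL n 1 = Finset.univ.image (fun e' : Edge n => [e']) := by
        ext w
        simp only [mem_LL, Finset.mem_image, Finset.mem_univ, true_and]
        constructor
        · intro h
          rcases w with - | ⟨e', w⟩
          · simp at h
          · simp only [List.length_cons] at h
            have : w = [] := by simpa using h
            exact ⟨e', by rw [this]⟩
        · rintro ⟨e', rfl⟩; rfl
      rw [this, Finset.sum_image (by intro a _ b _ h; simpa using h)]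
      rw [Finset.sum_eq_single e]
      · simp [wordOf]
      · intro e' _ hne
        rw [if_neg]; simp only [decide_eq_true_eq, List.cons.injEq, and_true]; exact hne
      · intro h; exact absurd (Finset.mem_univ e) h
    · rw [if_neg (by omega)]
      refine Finset.sum_eq_zero fun w hw => ?_
      rw [mem_LL] at hw
      rw [if_neg]; simp only [decide_eq_true_eq]; intro h; subst h; simp at hw

/-- `w` is a path starting at `v`. -/
def startsAt {n : ℕ} (v : Fin n) : List (Edge n) → Bool
  | [] => true
  | e :: rest => decide (v = e.1) && startsAt e.2 rest

/-- Split a word at the last edge landing at `i`, if any. -/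
def splitL {n : ℕ} (i : Fin n) : List (Edge n) → Option (List (Edge n) × List (Edge n))
  | [] => none
  | e :: rest =>
      match splitL i rest with
      | some (u, v) => some (e :: u, v)
      | none => if e.2 = i then some ([e], rest) else none

lemma splitL_eq_append {i : Fin n} : ∀ {w u v : List (Edge n)},
    splitL i w = some (u, v) → w = u ++ v := by
  intro w
  induction w with
  | nil => intro u v h; simp [splitL] at h
  | cons e rest ih =>
    intro u v h
    rw [splitL] at h
    rcases hs : splitL i rest with - | ⟨u', v'⟩
    · rw [hs] at h
      by_cases he : e.2 = i
      · rw [if_pos he] at h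
        obtain ⟨rfl, rfl⟩ := Prod.mk.injEq .. ▸ Option.some.injEq .. ▸ h
        · rfl
      · rw [if_neg he] at h; exact absurd h (by simp)
    · rw [hs] at h
      simp only [Option.some.injEq, Prod.mk.injEq] at h
      obtain ⟨rfl, rfl⟩ := h
      simp [ih hs]

lemma splitL_none_of_avoid {i : Fin n} : ∀ {w : List (Edge n)} {v : Fin n},
    avoidFrom i v w = true → splitL i w = none := by
  intro w
  induction w with
  | nil => intro v _; rfl
  | cons e rest ih =>
    intro v h
    rw [avoidFrom] at h
    simp only [Bool.and_eq_true, Bool.not_eq_true', decide_eq_false_iff_not] at h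
    rw [splitL, ih h.2, if_neg h.1.2]

lemma startsAt_of_avoidFrom {i : Fin n} : ∀ {w : List (Edge n)} {v : Fin n},
    avoidFrom i v w = true → startsAt v w = true := by
  intro w
  induction w with
  | nil => intro v _; rfl
  | cons e rest ih =>
    intro v h
    rw [avoidFrom] at h
    simp only [Bool.and_eq_true] at h
    rw [startsAt, h.1.1, ih h.2]; rfl

lemma startsAt_append {b : Fin n} {v : List (Edge n)} (hv : startsAt b v = true) :
    ∀ {u : List (Edge n)} {a : Fin n}, isPath a b u = true →
    startsAt a (u ++ v) = true := by
  intro u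
  induction u with
  | nil =>
    intro a hu
    rw [isPath] at hu
    simp only [decide_eq_true_eq] at hu
    subst hu
    exact hv
  | cons e rest ih =>
    intro a hu
    rw [isPath] at hu
    simp only [Bool.and_eq_true] at hu
    rw [List.cons_append, startsAt, hu.1, ih hu.2]; rfl

lemma splitL_main {i : Fin n} : ∀ {w : List (Edge n)} {v0 : Fin n},
    startsAt v0 w = true →
    (match splitL i w with
     | some (u, v) => isPath v0 i u = true ∧ avoidFrom i i v = true ∧ w = u ++ v
     | none => avoidFrom i v0 w = true) := by
  intro w
  induction w with
  | nil => intro v0 _; rw [splitL]; rfl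
  | cons e rest ih =>
    intro v0 h
    rw [startsAt] at h
    simp only [Bool.and_eq_true] at h
    have IH := ih (v0 := e.2) h.2
    rcases hs : splitL i rest with - | ⟨u, v⟩ <;> rw [hs] at IH
    · have IH' : avoidFrom i e.2 rest = true := IH
      by_cases he : e.2 = i
      · subst he
        simp only [splitL, hs, if_pos rfl]
        refine ⟨?_, IH', rfl⟩
        rw [isPath, isPath, h.1]
        simp
      · simp only [splitL, hs, if_neg he]
        rw [avoidFrom]
        simp [h.1, he, IH']
    · have IH' : isPath e.2 i u = true ∧ avoidFrom i i v = true ∧ rest = u ++ v := IH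
      obtain ⟨h1, h2, h3⟩ := IH'
      simp only [splitL, hs]
      refine ⟨?_, h2, by rw [h3, List.cons_append]⟩
      rw [isPath, h.1, h1]; rfl

lemma splitL_append {i : Fin n} : ∀ {u : List (Edge n)} {a : Fin n} {v : List (Edge n)},
    u ≠ [] → isPath a i u = true → splitL i v = none →
    splitL i (u ++ v) = some (u, v) := by
  intro u
  induction u with
  | nil => intro a v h _ _; exact absurd rfl h
  | cons e rest ih =>
    intro a v _ hp hv
    rw [isPath] at hp
    simp only [Bool.and_eq_true] at hp
    rcases rest with - | ⟨e2, rest2⟩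
    · rw [isPath] at hp
      simp only [decide_eq_true_eq] at hp
      rw [List.cons_append, List.nil_append, splitL, hv, if_pos hp.2]
    · have := ih (a := e.2) (v := v) (by simp) hp.2 hv
      rw [List.cons_append, splitL, this]

noncomputable def NM (n : ℕ) :
    Matrix (Fin n) (Fin n) (PowerSeries (FreeAlgebra ℚ (Edge n))) :=
  Matrix.of fun k l => ser (isPath k l)

def f1 (k t l : Fin n) : List (Edge n) → Option (List (Edge n) × List (Edge n))
  | [] => none
  | e :: rest => if e = (k, t) ∧ isPath t l rest = true then some ([e], rest) else none

lemma genM_eq_ser (k t : Fin n) : genM n k t = ser (fun w => decide (w = [(k, t)])) := by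
  rw [ser_single]; rfl

lemma edge_mul_path (k t l : Fin n) :
    genM n k t * ser (isPath t l) = ser (fun w => (f1 k t l w).isSome) := by
  rw [genM_eq_ser]
  apply ser_mul
  · rintro (- | ⟨e, rest⟩) u v h
    · simp [f1] at h
    · rw [f1] at h
      by_cases hc : e = (k, t) ∧ isPath t l rest = true
      · rw [if_pos hc] at h
        simp only [Option.some.injEq, Prod.mk.injEq] at h
        obtain ⟨rfl, rfl⟩ := h
        exact ⟨rfl, by simp [hc.1], hc.2⟩
      · rw [if_neg hc] at h; simp at h
  · intro u v hp hq
    simp only [decide_eq_true_eq] at hp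
    subst hp
    simp [f1, hq]

def rcons (k l : Fin n) : List (Edge n) → Bool
  | [] => false
  | e :: rest => decide (e.1 = k) && isPath e.2 l rest

lemma sum_edge_mul (k l : Fin n) :
    ∑ t, ser (fun w => (f1 k t l w).isSome) = ser (rcons k l) := by
  apply ser_sum
  · rintro (- | ⟨e, rest⟩)
    · simp [rcons, f1]
    · simp only [rcons, f1, Bool.and_eq_true, decide_eq_true_eq]
      constructor
      · rintro ⟨h1, h2⟩
        refine ⟨e.2, ?_⟩
        rw [if_pos ⟨by rw [← h1], h2⟩]; rfl
      · rintro ⟨t, ht⟩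
        by_cases hc : e = (k, t) ∧ isPath t l rest = true
        · exact ⟨by rw [hc.1], by rw [show e.2 = t from by rw [hc.1]]; exact hc.2⟩
        · rw [if_neg hc] at ht; simp at ht
  · rintro t t' (- | ⟨e, rest⟩) h h'
    · simp [f1] at h
    · rw [f1] at h h'
      by_cases hc : e = (k, t) ∧ isPath t l rest = true
      · by_cases hc' : e = (k, t') ∧ isPath t' l rest = true
        · rw [hc.1] at hc'
          exact (Prod.mk.injEq .. ▸ hc'.1).2.symm ▸ rfl
        · rw [if_neg hc'] at h'; simp at h'
      · rw [if_neg hc] at h; simp at h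

lemma path_decomp_left (k l : Fin n) :
    ser (isPath k l) = (if k = l then 1 else 0) + ∑ t, genM n k t * ser (isPath t l) := by
  have hsum : ∑ t, genM n k t * ser (isPath t l) = ser (rcons k l) := by
    rw [← sum_edge_mul]
    exact Finset.sum_congr rfl fun t _ => edge_mul_path k t l
  rw [hsum]
  by_cases hkl : k = l
  · subst hkl
    rw [if_pos rfl, ← ser_nil]
    refine (ser_add _ _ _ ?_ ?_).symm
    · rintro (- | ⟨e, rest⟩)
      · simp [isPath, rcons]
      · simp [isPath, rcons, eq_comm]
    · rintro (- | ⟨e, rest⟩) ⟨h1, h2⟩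
      · simp [rcons] at h2
      · simp at h1
  · rw [if_neg hkl, zero_add]
    refine (ser_congr fun w => ?_).symm
    rcases w with - | ⟨e, rest⟩
    · simp [isPath, rcons, hkl]
    · simp [isPath, rcons, eq_comm]

def f2 (k t l : Fin n) (w : List (Edge n)) : Option (List (Edge n) × List (Edge n)) :=
  if w.getLast? = some (t, l) ∧ isPath k t w.dropLast = true then
    some (w.dropLast, [(t, l)]) else none

lemma path_mul_edge (k t l : Fin n) :
    ser (isPath k t) * genM n t l = ser (fun w => (f2 k t l w).isSome) := by
  rw [genM_eq_ser]
  apply ser_mul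
  · intro w u v h
    rw [f2] at h
    by_cases hc : w.getLast? = some (t, l) ∧ isPath k t w.dropLast = true
    · rw [if_pos hc] at h
      simp only [Option.some.injEq, Prod.mk.injEq] at h
      obtain ⟨rfl, rfl⟩ := h
      have hne : w ≠ [] := by
        intro hw; rw [hw] at hc; simp at hc
      refine ⟨?_, hc.2, by simp⟩
      have h1 : w.dropLast ++ [w.getLast hne] = w := List.dropLast_append_getLast hne
      have h2 : w.getLast hne = (t, l) := by
        have := List.getLast?_eq_getLast hne
        rw [this] at hc
        exact Option.some.injEq .. ▸ hc.1
      conv_lhs => rw [← h1]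
      rw [h2]
    · rw [if_neg hc] at h; simp at h
  · intro u v hp hq
    simp only [decide_eq_true_eq] at hq
    subst hq
    rw [f2, if_pos ⟨List.getLast?_concat, by rw [List.dropLast_concat]; exact hp⟩,
      List.dropLast_concat]

def rsnoc (k l : Fin n) (w : List (Edge n)) : Bool :=
  match w.getLast? with
  | none => false
  | some e => decide (e.2 = l) && isPath k e.1 w.dropLast

lemma sum_path_mul (k l : Fin n) :
    ∑ t, ser (fun w => (f2 k t l w).isSome) = ser (rsnoc k l) := by
  apply ser_sum
  · intro w
    rcases hlast : w.getLast? with - | e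
    · simp only [rsnoc, hlast]
      constructor
      · intro h; simp at h
      · rintro ⟨t, ht⟩
        rw [f2] at ht
        rw [if_neg (by rw [hlast]; simp)] at ht
        simp at ht
    · simp only [rsnoc, hlast, Bool.and_eq_true, decide_eq_true_eq]
      constructor
      · rintro ⟨h1, h2⟩
        refine ⟨e.1, ?_⟩
        rw [f2, if_pos ⟨by rw [hlast, ← h1], h2⟩]; rfl
      · rintro ⟨t, ht⟩
        rw [f2] at ht
        by_cases hc : w.getLast? = some (t, l) ∧ isPath k t w.dropLast = true
        · rw [hlast] at hc
          have he : e = (t, l) := Option.some.injEq .. ▸ hc.1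
          subst he
          exact ⟨rfl, hc.2⟩
        · rw [if_neg hc] at ht; simp at ht
  · intro t t' w h h'
    rw [f2] at h h'
    by_cases hc : w.getLast? = some (t, l) ∧ isPath k t w.dropLast = true
    · by_cases hc' : w.getLast? = some (t', l) ∧ isPath k t' w.dropLast = true
      · rw [hc.1] at hc'
        have := Option.some.injEq .. ▸ hc'.1
        exact ((Prod.mk.injEq .. ▸ this).1).symm ▸ rfl
      · rw [if_neg hc'] at h'; simp at h'
    · rw [if_neg hc] at h; simp at h

lemma isPath_snoc (l : Fin n) (e : Edge n) : ∀ (u : List (Edge n)) (k : Fin n),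
    isPath k l (u ++ [e]) = (isPath k e.1 u && decide (e.2 = l)) := by
  intro u
  induction u with
  | nil => intro k; simp [isPath]
  | cons e' rest ih =>
    intro k
    rw [List.cons_append, isPath, ih, isPath, Bool.and_assoc]

lemma path_decomp_right (k l : Fin n) :
    ser (isPath k l) = (if k = l then 1 else 0) + ∑ t, ser (isPath k t) * genM n t l := by
  have hsum : ∑ t, ser (isPath k t) * genM n t l = ser (rsnoc k l) := by
    rw [← sum_path_mul]
    exact Finset.sum_congr rfl fun t _ => path_mul_edge k t l
  rw [hsum]
  have hr : ∀ w : List (Edge n), w ≠ [] → isPath k l w = rsnoc k l w := by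
    intro w hw
    rcases List.eq_nil_or_concat w with rfl | ⟨u, e, rfl⟩
    · exact absurd rfl hw
    · rw [List.concat_eq_append, isPath_snoc]
      simp only [rsnoc, List.getLast?_concat, List.dropLast_concat]
      rw [Bool.and_comm]
  by_cases hkl : k = l
  · subst hkl
    rw [if_pos rfl, ← ser_nil]
    refine (ser_add _ _ _ ?_ ?_).symm
    · intro w
      rcases hw : w with - | ⟨e, rest⟩
      · simp [isPath, rsnoc]
      · rw [← hw, hr w (by rw [hw]; simp), hw]
        simp
    · rintro w ⟨h1, h2⟩
      simp only [decide_eq_true_eq] at h1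
      subst h1
      simp [rsnoc] at h2
  · rw [if_neg hkl, zero_add]
    refine (ser_congr fun w => ?_).symm
    rcases hw : w with - | ⟨e, rest⟩
    · simp [isPath, rsnoc, hkl]
    · rw [← hw, hr w (by rw [hw]; simp)]

lemma left_inv_mat (n : ℕ) : (1 - genM n) * NM n = 1 := by
  ext k l
  rw [Matrix.sub_mul, Matrix.one_mul, Matrix.sub_apply, Matrix.mul_apply]
  have hN : ∀ a b : Fin n, NM n a b = ser (isPath a b) := fun _ _ => rfl
  simp only [hN]
  rw [path_decomp_left k l]
  rw [add_sub_cancel_right]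
  rw [Matrix.one_apply]

lemma right_inv_mat (n : ℕ) : NM n * (1 - genM n) = 1 := by
  ext k l
  rw [Matrix.mul_sub, Matrix.mul_one, Matrix.sub_apply, Matrix.mul_apply]
  have hN : ∀ a b : Fin n, NM n a b = ser (isPath a b) := fun _ _ => rfl
  simp only [hN]
  rw [path_decomp_right k l]
  rw [add_sub_cancel_right]
  rw [Matrix.one_apply]

lemma ringInverse_genM (n : ℕ) : Ring.inverse (1 - genM n) = NM n := by
  let u : (Matrix (Fin n) (Fin n) (PowerSeries (FreeAlgebra ℚ (Edge n))))ˣ :=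
    ⟨1 - genM n, NM n, left_inv_mat n, right_inv_mat n⟩
  exact Ring.inverse_unit u

def sig (a i : Fin n) (w : List (Edge n)) : Option (List (Edge n) × List (Edge n)) :=
  match splitL i w with
  | some (u, v) =>
      if isPath a i u = true ∧ avoidFrom i i v = true then some (u, v) else none
  | none => if a = i ∧ avoidFrom i i w = true then some ([], w) else none

lemma sig_h1 {a i : Fin n} {w u v : List (Edge n)} (h : sig a i w = some (u, v)) :
    w = u ++ v ∧ isPath a i u = true ∧ avoidFrom i i v = true := by
  rcases hs : splitL i w with - | ⟨u', v'⟩ <;> simp only [sig, hs] at h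
  · by_cases hc : a = i ∧ avoidFrom i i w = true
    · rw [if_pos hc] at h
      simp only [Option.some.injEq, Prod.mk.injEq] at h
      obtain ⟨rfl, rfl⟩ := h
      exact ⟨rfl, by simp [isPath, hc.1], hc.2⟩
    · rw [if_neg hc] at h; simp at h
  · by_cases hc : isPath a i u' = true ∧ avoidFrom i i v' = true
    · rw [if_pos hc] at h
      simp only [Option.some.injEq, Prod.mk.injEq] at h
      obtain ⟨rfl, rfl⟩ := h
      exact ⟨splitL_eq_append hs, hc.1, hc.2⟩
    · rw [if_neg hc] at h; simp at h

lemma sig_h2 {a i : Fin n} {u v : List (Edge n)} (hp : isPath a i u = true)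
    (hq : avoidFrom i i v = true) : sig a i (u ++ v) = some (u, v) := by
  rcases u with - | ⟨e, u'⟩
  · rw [isPath] at hp
    simp only [decide_eq_true_eq] at hp
    rw [List.nil_append]
    simp only [sig, splitL_none_of_avoid hq]
    rw [if_pos ⟨hp, hq⟩]
  · have hsplit := splitL_append (u := e :: u') (by simp) hp (splitL_none_of_avoid hq)
    simp only [sig, hsplit]
    rw [if_pos ⟨hp, hq⟩]

lemma side (a i : Fin n) :
    ser (isPath a i) * ser (avoidFrom i i) +
      ser (fun w => !decide (a = i) && avoidFrom i a w) = ser (startsAt a) := by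
  rw [ser_mul _ _ (sig a i) (fun w u v h => sig_h1 h) (fun u v hp hq => sig_h2 hp hq)]
  have key : ∀ w : List (Edge n),
      startsAt a w = ((sig a i w).isSome || (!decide (a = i) && avoidFrom i a w)) ∧
      ((sig a i w).isSome && (!decide (a = i) && avoidFrom i a w)) = false := by
    intro w
    by_cases hs : startsAt a w = true
    · have H := splitL_main (i := i) hs
      rcases hsp : splitL i w with - | ⟨u, v⟩ <;> rw [hsp] at H
      · have H' : avoidFrom i a w = true := H
        by_cases hai : a = i
        · have hsome : (sig a i w).isSome = true := by
            rw [sig, hsp, if_pos ⟨hai, hai ▸ H'⟩]; rfl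
          rw [hs, hsome]
          simp [hai]
        · have hnone : (sig a i w).isSome = false := by
            rw [sig, hsp, if_neg (fun hc => hai hc.1)]; rfl
          rw [hs, hnone, H']
          simp [hai]
      · obtain ⟨h1, h2, h3⟩ := H
        have hsome : (sig a i w).isSome = true := by
          simp only [sig, hsp]
          rw [if_pos ⟨h1, h2⟩]; rfl
        have hq : (!decide (a = i) && avoidFrom i a w) = false := by
          by_cases hai : a = i
          · simp [hai]
          · rcases hav : avoidFrom i a w with - | -
            · simp
            · rw [splitL_none_of_avoid hav] at hsp; exact absurd hsp (by simp)
        rw [hs, hsome, hq]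
        simp
    · have hsB : startsAt a w = false := by
        rcases h : startsAt a w with - | - 
        · rfl
        · exact absurd h hs
      have hq : (!decide (a = i) && avoidFrom i a w) = false := by
        rcases hav : avoidFrom i a w with - | -
        · simp
        · exact absurd (startsAt_of_avoidFrom hav) hs
      have hp : (sig a i w).isSome = false := by
        rcases hsg : sig a i w with - | ⟨u, v⟩
        · rfl
        · obtain ⟨rfl, h1, h2⟩ := sig_h1 hsg
          exact absurd (startsAt_append (startsAt_of_avoidFrom h2) h1) hs
      rw [hsB, hp, hq]
      simp
  refine ser_add _ _ _ (fun w => (key w).1) fun w ⟨h1, h2⟩ => ?_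
  have h := (key w).2
  rw [h1, h2] at h
  simp at h

/-- In `ℚ⟨⟨a_kl⟩⟩` (vertex set `Fin (n+1)`, with `0` playing the role of the
vertex "1"), for all vertices `i, j`:
`((1 − M)⁻¹)_{1i} · P_i + Q_i = ((1 − M)⁻¹)_{1j} · P_j + Q_j`,
where `P_i` is the series of paths starting at `i` never returning to `i`, and `Q_i` the
series of paths starting at vertex `1` never passing through `i` (so `Q_1 = 0`). -/
theorem stmt11 (n : ℕ) (i j : Fin (n + 1)) :
    Ring.inverse (1 - genM (n + 1)) 0 i * ser (avoidFrom i i) +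
        ser (fun w => !decide ((0 : Fin (n + 1)) = i) && avoidFrom i 0 w) =
      Ring.inverse (1 - genM (n + 1)) 0 j * ser (avoidFrom j j) +
        ser (fun w => !decide ((0 : Fin (n + 1)) = j) && avoidFrom j 0 w) := by
  have key : ∀ k : Fin (n + 1),
      Ring.inverse (1 - genM (n + 1)) 0 k * ser (avoidFrom k k) +
        ser (fun w => !decide ((0 : Fin (n + 1)) = k) && avoidFrom k 0 w) =
      ser (startsAt (0 : Fin (n + 1))) := by
    intro k
    rw [ringInverse_genM]
    have hN : NM (n + 1) 0 k = ser (isPath 0 k) := rfl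
    rw [hN]
    exact side 0 k
  rw [key i, key j]
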